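/- Let A, B be groups with families of subgroups (A_i)_{i∈I_α}, (B_i)_{i∈I_β} over disjoint finite sets, each satisfying the condition (RC1): for all J with |complement| ≥ 2, the intersection subgroup is generated by the one-step-larger intersections. Define in G = A * B the subgroups G_i = ⟨A_{{i}∩I_α}, B_{{i}∩I_β}⟩ (so G_i = ⟨A_i, B⟩ or ⟨A, B_i⟩). Then (G, (G_i)_{i∈I_α⊔I_β}) also satisfies (RC1): for all J ⊆ I_α ⊔ I_β with |((I_α⊔I_β) ∖ J)| ≥ 2, ⋂_{j∈J} G_j = ⟨G_{J∪{i}} : i ∈ (I_α⊔I_β) ∖ J⟩. -/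

import Mathlib

open scoped Monoid.Coprod

namespace Stmt11Aux

open Monoid

section CoprodILemmas

variable {ι : Type*} [DecidableEq ι] {M : ι → Type*} [∀ i, Group (M i)]
  [∀ i, DecidableEq (M i)]

open Monoid.CoprodI

theorem equiv_mul (x y : CoprodI M) :
    Word.equiv (x * y) = x • (Word.equiv y : Word M) :=
  mul_smul x y (Word.empty (M := M))

theorem equiv_one : (Word.equiv (1 : CoprodI M)) = Word.empty :=
  one_smul (CoprodI M) (Word.empty (M := M))

theorem mem_iSup_iff (N : ∀ i, Subgroup (M i)) (x : CoprodI M) :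
    x ∈ (⨆ i, (N i).map (of : M i →* CoprodI M)) ↔
      ∀ (i : ι) (m : M i), (⟨i, m⟩ : Σ i, M i) ∈ (Word.equiv x).toList → m ∈ N i := by
  have key : ∀ (j : ι) (n : M j), n ∈ N j → ∀ y : CoprodI M,
      (∀ (i : ι) (m : M i), (⟨i, m⟩ : Σ i, M i) ∈ (Word.equiv y).toList → m ∈ N i) →
      ∀ (i : ι) (m : M i), (⟨i, m⟩ : Σ i, M i) ∈ (Word.equiv (of n * y)).toList → m ∈ N i := by
    intro j n hn y hy i m hm
    rw [equiv_mul, Word.mem_smul_iff] at hm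
    rcases hm with ⟨hij, hmem⟩ | ⟨hm1, hij, hrest⟩
    · exact hy i m hmem
    · subst hij
      rcases hrest with htail | ⟨m', hm', rfl⟩ | ⟨hfst, rfl⟩
      · exact hy i m (List.mem_of_mem_tail htail)
      · exact mul_mem hn (hy i m' (List.mem_of_mem_head? hm'))
      · exact hn
  constructor
  · intro hx
    rw [Subgroup.iSup_eq_closure] at hx
    induction hx using Subgroup.closure_induction_left with
    | one =>
      intro i m hm
      rw [equiv_one] at hm
      simp [Word.empty] at hm
    | mul_left g hg y hy ih =>
      obtain ⟨j, n, hn, rfl⟩ : ∃ j n, n ∈ N j ∧ of n = g := by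
        simpa [Subgroup.mem_map] using hg
      exact key j n hn y ih
    | inv_mul_cancel g hg y hy ih =>
      obtain ⟨j, n, hn, rfl⟩ : ∃ j n, n ∈ N j ∧ of n = g := by
        simpa [Subgroup.mem_map] using hg
      rw [← map_inv]
      exact key j n⁻¹ (inv_mem hn) y ih
  · intro h
    have hx : x = Word.prod (Word.equiv x) := (Word.equiv.left_inv x).symm
    rw [hx, Word.prod]
    refine list_prod_mem ?_
    intro g hg
    rw [List.mem_map] at hg
    obtain ⟨⟨i, m⟩, hmem, rfl⟩ := hg
    exact Subgroup.mem_iSup_of_mem i (Subgroup.mem_map.2 ⟨m, h i m hmem, rfl⟩)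

theorem inf_iSup_map (N N' : ∀ i, Subgroup (M i)) :
    ((⨆ i, (N i).map (of : M i →* CoprodI M)) ⊓ ⨆ i, (N' i).map (of : M i →* CoprodI M))
      = ⨆ i, (N i ⊓ N' i).map (of : M i →* CoprodI M) := by
  ext x
  simp only [Subgroup.mem_inf, mem_iSup_iff, Subgroup.mem_inf]
  exact ⟨fun ⟨h1, h2⟩ i m hm => ⟨h1 i m hm, h2 i m hm⟩,
    fun h => ⟨fun i m hm => (h i m hm).1, fun i m hm => (h i m hm).2⟩⟩

end CoprodILemmas

section CoprodTransfer

universe u v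

variable (A : Type u) (B : Type v) [Group A] [Group B]

/-- The Bool-indexed family `true ↦ A`, `false ↦ B` (with `ULift` to equalize universes). -/
def MM : Bool → Type (max u v) := fun b => Bool.rec (ULift.{u} B) (ULift.{v} A) b

instance : ∀ b, Group (MM A B b) := fun b =>
  Bool.rec (inferInstanceAs (Group (ULift B))) (inferInstanceAs (Group (ULift A))) b

/-- The canonical map `A ∗ B →* CoprodI (MM A B)`. -/
def toI : A ∗ B →* CoprodI (MM A B) :=
  Coprod.lift
    ((CoprodI.of (M := MM A B) (i := true)).comp
      (MulEquiv.ulift : ULift.{v} A ≃* A).symm.toMonoidHom)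
    ((CoprodI.of (M := MM A B) (i := false)).comp
      (MulEquiv.ulift : ULift.{u} B ≃* B).symm.toMonoidHom)

/-- The canonical map `CoprodI (MM A B) →* A ∗ B`. -/
def ofI : CoprodI (MM A B) →* A ∗ B :=
  CoprodI.lift fun b =>
    Bool.rec
      ((Coprod.inr : B →* A ∗ B).comp (MulEquiv.ulift : ULift.{u} B ≃* B).toMonoidHom)
      ((Coprod.inl : A →* A ∗ B).comp (MulEquiv.ulift : ULift.{v} A ≃* A).toMonoidHom) b

theorem ofI_comp_toI : (ofI A B).comp (toI A B) = MonoidHom.id _ := by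
  refine Coprod.hom_ext ?_ ?_ <;> ext x <;> rfl

theorem toI_comp_ofI : (toI A B).comp (ofI A B) = MonoidHom.id _ := by
  ext b x
  cases b <;> rfl

theorem toI_injective : Function.Injective (toI A B) := by
  intro x y h
  have := congrArg (ofI A B) h
  simpa [← MonoidHom.comp_apply, ofI_comp_toI] using this

/-- The family of subgroups `true ↦ A₁`, `false ↦ B₁`. -/
def NN (A₁ : Subgroup A) (B₁ : Subgroup B) : ∀ b, Subgroup (MM A B b) := fun b =>
  Bool.rec (B₁.map (MulEquiv.ulift : ULift.{u} B ≃* B).symm.toMonoidHom)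
    (A₁.map (MulEquiv.ulift : ULift.{v} A ≃* A).symm.toMonoidHom) b

theorem map_toI_sup (A₁ : Subgroup A) (B₁ : Subgroup B) :
    (A₁.map Coprod.inl ⊔ B₁.map Coprod.inr).map (toI A B)
      = ⨆ b, (NN A B A₁ B₁ b).map (CoprodI.of (M := MM A B)) := by
  have h1 : (NN A B A₁ B₁ true).map (CoprodI.of (M := MM A B))
      = A₁.map ((CoprodI.of (M := MM A B) (i := true)).comp
          (MulEquiv.ulift : ULift.{v} A ≃* A).symm.toMonoidHom) :=
    Subgroup.map_map A₁ (CoprodI.of (M := MM A B) (i := true))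
      (MulEquiv.ulift : ULift.{v} A ≃* A).symm.toMonoidHom
  have h2 : (NN A B A₁ B₁ false).map (CoprodI.of (M := MM A B))
      = B₁.map ((CoprodI.of (M := MM A B) (i := false)).comp
          (MulEquiv.ulift : ULift.{u} B ≃* B).symm.toMonoidHom) :=
    Subgroup.map_map B₁ (CoprodI.of (M := MM A B) (i := false))
      (MulEquiv.ulift : ULift.{u} B ≃* B).symm.toMonoidHom
  rw [iSup_bool_eq, Subgroup.map_sup, Subgroup.map_map, Subgroup.map_map, h1, h2]
  rfl

theorem parabolic_inf (A₁ A₂ : Subgroup A) (B₁ B₂ : Subgroup B) :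
    (A₁.map (Coprod.inl : A →* A ∗ B) ⊔ B₁.map (Coprod.inr : B →* A ∗ B))
      ⊓ (A₂.map (Coprod.inl : A →* A ∗ B) ⊔ B₂.map (Coprod.inr : B →* A ∗ B))
      = (A₁ ⊓ A₂).map (Coprod.inl : A →* A ∗ B) ⊔ (B₁ ⊓ B₂).map (Coprod.inr : B →* A ∗ B) := by
  classical
  refine Subgroup.map_injective (toI_injective A B) ?_
  rw [Subgroup.map_inf _ _ _ (toI_injective A B), map_toI_sup, map_toI_sup, map_toI_sup,
    inf_iSup_map]
  refine iSup_congr fun b => ?_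
  congr 1
  cases b
  · exact (Subgroup.map_inf _ _ _ (MulEquiv.injective _)).symm
  · exact (Subgroup.map_inf _ _ _ (MulEquiv.injective _)).symm

end CoprodTransfer

end Stmt11Aux

/-- If the families `(A_i)` and `(B_i)` both satisfy (RC1), then the family
`(G_i)` of maximal parabolic subgroups of the free product `A ∗ B` also satisfies (RC1). -/
theorem stmt_11 {A B : Type*} [Group A] [Group B]
    {Iα Iβ : Type*} [Fintype Iα] [Fintype Iβ] [DecidableEq Iα] [DecidableEq Iβ]
    (Ai : Iα → Subgroup A) (Bi : Iβ → Subgroup B)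
    (hRCA : ∀ J : Finset Iα, 2 ≤ Jᶜ.card →
      (⨅ j ∈ J, Ai j) = ⨆ i ∈ Jᶜ, ⨅ j ∈ insert i J, Ai j)
    (hRCB : ∀ J : Finset Iβ, 2 ≤ Jᶜ.card →
      (⨅ j ∈ J, Bi j) = ⨆ i ∈ Jᶜ, ⨅ j ∈ insert i J, Bi j)
    (Gi : Iα ⊕ Iβ → Subgroup (A ∗ B))
    (hGα : ∀ i : Iα, Gi (Sum.inl i)
        = (Ai i).map (Monoid.Coprod.inl : A →* A ∗ B)
          ⊔ (⊤ : Subgroup B).map (Monoid.Coprod.inr : B →* A ∗ B))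
    (hGβ : ∀ i : Iβ, Gi (Sum.inr i)
        = (⊤ : Subgroup A).map (Monoid.Coprod.inl : A →* A ∗ B)
          ⊔ (Bi i).map (Monoid.Coprod.inr : B →* A ∗ B)) :
    ∀ J : Finset (Iα ⊕ Iβ), 2 ≤ Jᶜ.card →
      (⨅ j ∈ J, Gi j) = ⨆ i ∈ Jᶜ, ⨅ j ∈ insert i J, Gi j := by
  classical
  have step1 : ∀ J : Finset (Iα ⊕ Iβ), (⨅ j ∈ J, Gi j)
      = (⨅ a ∈ J.toLeft, Ai a).map Monoid.Coprod.inl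
        ⊔ (⨅ b ∈ J.toRight, Bi b).map Monoid.Coprod.inr := by
    intro J
    induction J using Finset.induction_on with
    | empty =>
      have hL : (∅ : Finset (Iα ⊕ Iβ)).toLeft = ∅ := by ext x; simp
      have hR : (∅ : Finset (Iα ⊕ Iβ)).toRight = ∅ := by ext x; simp
      simp only [hL, hR, Finset.notMem_empty, iInf_false, iInf_top,
        ← MonoidHom.range_eq_map, Monoid.Coprod.range_inl_sup_range_inr]
    | @insert j J hj ih =>
      rw [Finset.iInf_insert, ih]
      cases j with
      | inl a =>
        rw [hGα a, Stmt11Aux.parabolic_inf, Finset.toLeft_insert_inl,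
          Finset.toRight_insert_inl, Finset.iInf_insert, top_inf_eq]
      | inr b =>
        rw [hGβ b, Stmt11Aux.parabolic_inf, Finset.toLeft_insert_inr,
          Finset.toRight_insert_inr, Finset.iInf_insert, top_inf_eq]
  intro J hJ
  rw [step1 J]
  have hCL : (Jᶜ).toLeft = (J.toLeft)ᶜ := by
    ext a; simp
  have hCR : (Jᶜ).toRight = (J.toRight)ᶜ := by
    ext b; simp
  refine le_antisymm (sup_le ?_ ?_) ?_
  · -- A-part
    rcases (Jᶜ).toRight.eq_empty_or_nonempty with hR | ⟨b, hb⟩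
    · have hcard : 2 ≤ (J.toLeft)ᶜ.card := by
        have h2 := Finset.card_toLeft_add_card_toRight (u := Jᶜ)
        rw [hR, hCL] at h2
        simpa using le_trans hJ (le_of_eq h2.symm)
      rw [hRCA J.toLeft hcard]
      simp only [Subgroup.map_iSup]
      refine iSup₂_le fun a ha => ?_
      have hmem : Sum.inl a ∈ Jᶜ := by
        rw [Finset.mem_compl] at ha ⊢
        simpa using fun h => ha (Finset.mem_toLeft.2 h)
      refine le_trans ?_ (le_iSup₂ (f := fun i (_ : i ∈ Jᶜ) => ⨅ j ∈ insert i J, Gi j)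
        (Sum.inl a) hmem)
      rw [step1 (insert (Sum.inl a) J), Finset.toLeft_insert_inl, Finset.toRight_insert_inl]
      exact le_sup_left
    · have hmem : Sum.inr b ∈ Jᶜ := Finset.mem_toRight.1 hb
      refine le_trans ?_ (le_iSup₂ (f := fun i (_ : i ∈ Jᶜ) => ⨅ j ∈ insert i J, Gi j)
        (Sum.inr b) hmem)
      rw [step1 (insert (Sum.inr b) J), Finset.toLeft_insert_inr, Finset.toRight_insert_inr]
      exact le_sup_left
  · -- B-part
    rcases (Jᶜ).toLeft.eq_empty_or_nonempty with hL | ⟨a, ha⟩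
    · have hcard : 2 ≤ (J.toRight)ᶜ.card := by
        have h2 := Finset.card_toLeft_add_card_toRight (u := Jᶜ)
        rw [hL, hCR] at h2
        simpa using le_trans hJ (le_of_eq h2.symm)
      rw [hRCB J.toRight hcard]
      simp only [Subgroup.map_iSup]
      refine iSup₂_le fun b hb => ?_
      have hmem : Sum.inr b ∈ Jᶜ := by
        rw [Finset.mem_compl] at hb ⊢
        simpa using fun h => hb (Finset.mem_toRight.2 h)
      refine le_trans ?_ (le_iSup₂ (f := fun i (_ : i ∈ Jᶜ) => ⨅ j ∈ insert i J, Gi j)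
        (Sum.inr b) hmem)
      rw [step1 (insert (Sum.inr b) J), Finset.toLeft_insert_inr, Finset.toRight_insert_inr]
      exact le_sup_right
    · have hmem : Sum.inl a ∈ Jᶜ := Finset.mem_toLeft.1 ha
      refine le_trans ?_ (le_iSup₂ (f := fun i (_ : i ∈ Jᶜ) => ⨅ j ∈ insert i J, Gi j)
        (Sum.inl a) hmem)
      rw [step1 (insert (Sum.inl a) J), Finset.toLeft_insert_inl, Finset.toRight_insert_inl]
      exact le_sup_right
  · refine iSup₂_le fun i hi => ?_
    rw [step1 (insert i J)]
    cases i with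
    | inl a =>
      rw [Finset.toLeft_insert_inl, Finset.toRight_insert_inl, Finset.iInf_insert]
      exact sup_le_sup (Subgroup.map_mono inf_le_right) le_rfl
    | inr b =>
      rw [Finset.toLeft_insert_inr, Finset.toRight_insert_inr, Finset.iInf_insert]
      exact sup_le_sup le_rfl (Subgroup.map_mono inf_le_right)
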